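/- Let $x : [-\tau, \infty) \to \mathbb{R}$ be continuous, differentiable on $(0,\infty)$, with $x(s) \le M$ for $s \in [-\tau, 0]$, and suppose that for each $\varepsilon > 0$ and all $t \in (0,\tau]$ one has $\dot x(t) \le c(t)\bigl((1+\varepsilon)M - x(t)\bigr)$ whenever $x(t) < (1+\varepsilon)M$, where $0 \le c(t) \le 1$. Then $x(t) \le M$ for all $t \in [0,\tau]$. -/

import Mathlib

/-- The ε-relaxation bootstrap step of the invariance lemma: a trajectory bounded by `M > 0`
on `[-τ,0]` whose derivative satisfies `ẋ(t) ≤ c(t)((1+ε)M - x(t))` whenever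
`x(t) < (1+ε)M`, for every `ε > 0` and `t ∈ (0,τ]`, cannot exceed `M` on `[0,τ]`. -/
theorem HK_bootstrap_step (τ M : ℝ) (hτ : 0 < τ) (hM : 0 < M)
    (x c : ℝ → ℝ)
    (hxcont : ContinuousOn x (Set.Ici (-τ)))
    (hdiff : ∀ t : ℝ, 0 < t → DifferentiableAt ℝ x t)
    (hc : ∀ t ∈ Set.Ioc 0 τ, c t ∈ Set.Icc (0 : ℝ) 1)
    (hinit : ∀ s ∈ Set.Icc (-τ) 0, x s ≤ M)
    (hineq : ∀ ε : ℝ, 0 < ε → ∀ t ∈ Set.Ioc 0 τ, x t < (1 + ε) * M →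
      deriv x t ≤ c t * ((1 + ε) * M - x t)) :
    ∀ t ∈ Set.Icc 0 τ, x t ≤ M := by
  -- Step 1: for each ε > 0, x stays strictly below (1+ε)M on [0,τ].
  have key : ∀ ε : ℝ, 0 < ε → ∀ t ∈ Set.Icc (0:ℝ) τ, x t < (1 + ε) * M := by
    intro ε hε
    by_contra hcontra
    push_neg at hcontra
    obtain ⟨t₁, ht₁, hxt₁⟩ := hcontra
    have hsub : Set.Icc (0:ℝ) τ ⊆ Set.Ici (-τ) := fun s hs =>
      le_trans (by linarith) hs.1
    have hCx : ContinuousOn x (Set.Icc 0 τ) := hxcont.mono hsub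
    set S : Set ℝ := Set.Icc 0 τ ∩ x ⁻¹' Set.Ici ((1 + ε) * M) with hSdef
    have hSclosed : IsClosed S :=
      hCx.preimage_isClosed_of_isClosed isClosed_Icc isClosed_Ici
    have hSne : S.Nonempty := ⟨t₁, ht₁, hxt₁⟩
    have hSbdd : BddBelow S := ⟨0, fun s hs => hs.1.1⟩
    set t₀ := sInf S with ht₀def
    have ht₀S : t₀ ∈ S := hSclosed.csInf_mem hSne hSbdd
    have ht₀Icc : t₀ ∈ Set.Icc (0:ℝ) τ := ht₀S.1
    have hx0 : x 0 ≤ M := hinit 0 ⟨by linarith, le_refl 0⟩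
    have hx0' : x 0 < (1 + ε) * M := by nlinarith
    have ht₀pos : 0 < t₀ := by
      rcases lt_or_eq_of_le ht₀Icc.1 with h | h
      · exact h
      · exfalso; have := ht₀S.2; rw [← h] at this; exact absurd this (not_le.mpr hx0')
    -- below t₀, x < (1+ε)M
    have hbelow : ∀ s ∈ Set.Ico (0:ℝ) t₀, x s < (1 + ε) * M := by
      intro s hs
      by_contra hle
      push_neg at hle
      have hsS : s ∈ S := ⟨⟨hs.1, le_trans hs.2.le ht₀Icc.2⟩, hle⟩
      exact absurd (csInf_le hSbdd hsS) (not_le.mpr hs.2)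
    -- the auxiliary function g
    set g : ℝ → ℝ := fun s => Real.exp s * ((1 + ε) * M - x s) with hgdef
    have hgderiv : ∀ s ∈ Set.Ioo (0:ℝ) t₀, HasDerivAt g
        (Real.exp s * ((1 + ε) * M - x s) + Real.exp s * (0 - deriv x s)) s := by
      intro s hs
      exact (Real.hasDerivAt_exp s).mul
        ((hasDerivAt_const s ((1 + ε) * M)).sub ((hdiff s hs.1).hasDerivAt))
    have hmono : MonotoneOn g (Set.Icc 0 t₀) := by
      apply monotoneOn_of_deriv_nonneg (convex_Icc 0 t₀)
      · exact (Real.continuous_exp.continuousOn).mul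
          ((continuousOn_const).sub (hCx.mono (Set.Icc_subset_Icc le_rfl ht₀Icc.2)))
      · intro s hs
        rw [interior_Icc] at hs
        exact (hgderiv s hs).differentiableAt.differentiableWithinAt
      · intro s hs
        rw [interior_Icc] at hs
        rw [(hgderiv s hs).deriv]
        have hsIoc : s ∈ Set.Ioc (0:ℝ) τ := ⟨hs.1, le_trans hs.2.le ht₀Icc.2⟩
        have hxs : x s < (1 + ε) * M := hbelow s ⟨hs.1.le, hs.2⟩
        have hd := hineq ε hε s hsIoc hxs
        have hcs := hc s hsIoc
        have h1 : deriv x s ≤ (1 + ε) * M - x s := by nlinarith [hcs.1, hcs.2]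
        have := Real.exp_pos s
        nlinarith
    have hg0 : g 0 = (1 + ε) * M - x 0 := by simp [hgdef]
    have hg0pos : 0 < g 0 := by rw [hg0]; nlinarith
    have hgt₀ : g t₀ ≤ 0 := by
      have := ht₀S.2
      simp only [hgdef]
      have : (1 + ε) * M - x t₀ ≤ 0 := by
        have := ht₀S.2; simp only [Set.mem_preimage, Set.mem_Ici] at this; linarith
      nlinarith [Real.exp_pos t₀]
    have := hmono (Set.left_mem_Icc.mpr ht₀Icc.1) (Set.right_mem_Icc.mpr ht₀Icc.1) ht₀Icc.1
    linarith
  -- Step 2: let ε → 0.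
  intro t ht
  by_contra hgt
  push_neg at hgt
  have hε : 0 < (x t - M) / (2 * M) := div_pos (by linarith) (by linarith)
  have := key _ hε t ht
  have : x t < M + (x t - M) / 2 := by
    have h2M : (2 * M) ≠ 0 := ne_of_gt (by linarith)
    calc x t < (1 + (x t - M) / (2 * M)) * M := this
      _ = M + (x t - M) / 2 := by field_simp
  linarith
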